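/- Let h₁, h₂ be monotone functions on a complete lattice. If h₁ ∘ h₂* ≤ h₂* ∘ h₁* pointwise, then h₁* ∘ h₂* ≤ h₂* ∘ h₁*, where k* denotes the least closure above k. -/
import Mathlib


def IsClosure {L : Type*} [CompleteLattice L] (c : L → L) : Prop :=
  Monotone c ∧ (∀ x, x ≤ c x) ∧ (∀ x, c (c x) ≤ c x)

def IsLeastClosureAbove {L : Type*} [CompleteLattice L] (k c : L → L) : Prop :=
  IsClosure c ∧ (∀ x, k x ≤ c x) ∧
    ∀ d, IsClosure d → (∀ x, k x ≤ d x) → ∀ x, c x ≤ d x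

/-- If h₁ ∘ h₂* ≤ h₂* ∘ h₁* then h₁* ∘ h₂* ≤ h₂* ∘ h₁*. -/
theorem stmt9 {L : Type*} [CompleteLattice L] (h₁ h₂ hs₁ hs₂ : L → L)
    (hm₁ : Monotone h₁) (hm₂ : Monotone h₂)
    (hls₁ : IsLeastClosureAbove h₁ hs₁) (hls₂ : IsLeastClosureAbove h₂ hs₂)
    (hyp : ∀ x, h₁ (hs₂ x) ≤ hs₂ (hs₁ x)) :
    ∀ x, hs₁ (hs₂ x) ≤ hs₂ (hs₁ x) := by
  classical
  obtain ⟨⟨hc₁m, hc₁e, hc₁i⟩, hk₁, hl₁⟩ := hls₁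
  obtain ⟨⟨hc₂m, hc₂e, hc₂i⟩, hk₂, hl₂⟩ := hls₂
  -- key: for any y with x ≤ y, h₁ y ≤ y, we have hs₁ x ≤ y
  have key : ∀ x y : L, x ≤ y → h₁ y ≤ y → hs₁ x ≤ y := by
    intro x y hxy hfy
    set d : L → L := fun z => if z ≤ y then y else ⊤ with hd
    have hdc : IsClosure d := by
      refine ⟨?_, ?_, ?_⟩
      · intro a b hab
        by_cases hb : b ≤ y
        · simp [hd, hb, hab.trans hb]
        · simp [hd, hb]
      · intro z
        by_cases hz : z ≤ y <;> simp [hd, hz]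
      · intro z
        by_cases hz : z ≤ y <;> simp [hd, hz]
    have hkd : ∀ z, h₁ z ≤ d z := by
      intro z
      by_cases hz : z ≤ y
      · simpa [hd, hz] using (hm₁ hz).trans hfy
      · simp [hd, hz]
    have := hl₁ d hdc hkd x
    simpa [hd, hxy] using this
  intro x
  refine key _ _ (hc₂m (hc₁e x)) ?_
  exact (hyp (hs₁ x)).trans (hc₂m (hc₁i x))
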